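/- If p_g ≤ (1 - (1-p_b)^{c_l}) / (α c_u) for α > 0, per-packet drop rates p_b, p_g ∈ [0,1], and packet-count bounds c_l ≤ c ≤ c_u for every connection, then the retransmission probabilities r_b = 1-(1-p_b)^{c} (for a bad link) and r_g = 1-(1-p_g)^{c'} (for a good link, c_l ≤ c' ≤ c_u) satisfy r_b ≥ α r_g. -/

import Mathlib

/-- If `pg ≤ (1 - (1-pb)^cl) / (α * cu)` with `α > 0`, and every connection has
between `cl` and `cu` packets, then the retransmission probabilities
`rb = 1-(1-pb)^c` (bad link, `cl ≤ c ≤ cu`) and `rg = 1-(1-pg)^c'`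
(good link, `cl ≤ c' ≤ cu`) satisfy `rb ≥ α * rg`. -/
theorem drop_rate_condition_implies_snr
    (pb pg α : ℝ) (hα : 0 < α)
    (hpb0 : 0 ≤ pb) (hpb1 : pb ≤ 1) (hpg0 : 0 ≤ pg) (hpg1 : pg ≤ 1)
    (cl cu c c' : ℕ) (hcl : 0 < cl)
    (hc1 : cl ≤ c) (hc2 : c ≤ cu) (hc'1 : cl ≤ c') (hc'2 : c' ≤ cu)
    (hpg : pg ≤ (1 - (1 - pb) ^ cl) / (α * (cu : ℝ))) :
    1 - (1 - pb) ^ c ≥ α * (1 - (1 - pg) ^ c') := by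
  have hcu : 0 < (cu : ℝ) := by exact_mod_cast lt_of_lt_of_le hcl (hc1.trans hc2)
  have h1 : (1 - pb) ^ c ≤ (1 - pb) ^ cl :=
    pow_le_pow_of_le_one (by linarith) (by linarith) hc1
  -- Bernoulli: (1 - pg)^{c'} ≥ 1 - c' * pg
  have hbern : 1 - (c' : ℝ) * pg ≤ (1 - pg) ^ c' := by
    have this : (1:ℝ) + (c' : ℝ) * -pg ≤ (1 + -pg) ^ c' := one_add_mul_le_pow (a := -pg) (by linarith) c'
    rw [← sub_eq_add_neg] at this
    linarith [this]
  have h2 : 1 - (1 - pg) ^ c' ≤ (cu : ℝ) * pg := by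
    have : (c' : ℝ) * pg ≤ (cu : ℝ) * pg := by
      apply mul_le_mul_of_nonneg_right _ hpg0
      exact_mod_cast hc'2
    linarith
  have h3 : α * ((cu : ℝ) * pg) ≤ 1 - (1 - pb) ^ cl := by
    have := mul_le_mul_of_nonneg_left hpg (by positivity : (0:ℝ) ≤ α * cu)
    rw [mul_div_cancel₀ _ (by positivity)] at this; linarith [this, mul_assoc α (cu:ℝ) pg]
  calc α * (1 - (1 - pg) ^ c') ≤ α * ((cu : ℝ) * pg) := by nlinarith
    _ ≤ 1 - (1 - pb) ^ cl := h3
    _ ≤ 1 - (1 - pb) ^ c := by linarith
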